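/- arXiv:1001.2878 — 2 statements merged into one kernel-verified Lean document; each statement's English description precedes it below -/
import Mathlib

section
/- Let α ∈ R \ Q and let φ ∈ C^ω(T,R) have average 0 and not be an analytic coboundary (i.e., there is no ψ ∈ C^ω(T,R) with φ(x) = ψ(x+α) − ψ(x)). Then the cocycle (α, R_φ) with A(x) = R_{φ(x)} ∈ SO(2,R) has fibered rotation number 0 but cannot be analytically conjugated to a cocycle of upper triangular matrices: there is no analytic B : T → SL(2,R) such that B(x+α) R_{φ(x)} B(x)^{-1} is upper triangular for all x. -/
/-- The rotation matrix by angle `θ` (real entries). -/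
noncomputable def RotR (θ : ℝ) : Matrix (Fin 2) (Fin 2) ℝ :=
  !![Real.cos θ, -Real.sin θ; Real.sin θ, Real.cos θ]

open scoped Real
open Complex Filter

lemma intval_const {k : ℝ → ℝ} (hk : Continuous k) (hint : ∀ x, ∃ m : ℤ, k x = m)
    (a b : ℝ) : k a = k b := by
  by_contra hne
  obtain ⟨ma, hma⟩ := hint a
  obtain ⟨mb, hmb⟩ := hint b
  have hne' : ma ≠ mb := by
    rintro rfl; exact hne (hma.trans hmb.symm)
  set M : ℤ := min ma mb with hM
  have h1 : (M : ℝ) + 1/2 ∈ Set.uIcc (k a) (k b) := by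
    rw [Set.mem_uIcc]
    rcases lt_or_gt_of_ne hne' with h | h
    · left
      have hMa : M = ma := by omega
      have hb1 : (ma : ℝ) + 1 ≤ mb := by exact_mod_cast h
      rw [hma, hmb, hMa]; constructor <;> linarith
    · right
      have hMa : M = mb := by omega
      have hb1 : (mb : ℝ) + 1 ≤ ma := by exact_mod_cast h
      rw [hma, hmb, hMa]; constructor <;> linarith
  obtain ⟨c, _, hc⟩ := intermediate_value_uIcc hk.continuousOn h1
  obtain ⟨mc, hmc⟩ := hint c
  rw [hmc] at hc
  have h2 : (2 * mc : ℝ) = 2 * M + 1 := by push_cast at hc ⊢; linarith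
  have h3 : (2 * mc : ℤ) = 2 * M + 1 := by exact_mod_cast h2
  omega

lemma exists_global_log {z : ℝ → ℂ} (hz : ∀ x, AnalyticAt ℝ z x) (hne : ∀ x, z x ≠ 0) :
    ∃ L : ℝ → ℂ, (∀ x, AnalyticAt ℝ L x) ∧ (∀ x, Complex.exp (L x) = z x) := by
  have hzc : Continuous z := continuous_iff_continuousAt.2 fun x => (hz x).continuousAt
  have hzon : AnalyticOnNhd ℝ z Set.univ := fun x _ => hz x
  have hdc : Continuous (deriv z) :=
    continuous_iff_continuousAt.2 fun x => ((hzon.deriv) x trivial).continuousAt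
  set f : ℝ → ℂ := fun t => deriv z t / z t with hf
  have hfc : Continuous f := hdc.div hzc hne
  set L0 : ℝ → ℂ := fun x => ∫ t in (0:ℝ)..x, f t with hL0def
  have hL0 : ∀ x, HasDerivAt L0 (f x) x := fun x =>
    (hfc.integral_hasStrictDerivAt 0 x).hasDerivAt
  have hL0c : Continuous L0 := continuous_iff_continuousAt.2 fun x => (hL0 x).continuousAt
  -- z x * exp (-L0 x) is constant
  have hF : ∀ x, HasDerivAt (fun y => z y * Complex.exp (-L0 y)) 0 x := by
    intro x
    have h1 : HasDerivAt z (deriv z x) x := (hz x).differentiableAt.hasDerivAt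
    have h2 : HasDerivAt (fun y => Complex.exp (-L0 y)) (Complex.exp (-L0 x) * (-f x)) x :=
      ((hL0 x).neg).cexp
    have h3 := h1.mul h2
    convert h3 using 1
    · rfl
    · rfl
    have hzx := hne x
    have h4 : z x * (Complex.exp (-L0 x) * f x) = deriv z x * Complex.exp (-L0 x) := by
      rw [hf]
      field_simp
    rw [show z x * (Complex.exp (-L0 x) * -f x) = -(z x * (Complex.exp (-L0 x) * f x)) by ring,
      h4]
    ring
  have hFconst : ∀ x, z x * Complex.exp (-L0 x) = z 0 := by
    intro x
    have := is_const_of_deriv_eq_zero (f := fun y => z y * Complex.exp (-L0 y))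
      (fun y => (hF y).differentiableAt) (fun y => (hF y).deriv) x 0
    simpa [hL0def, intervalIntegral.integral_same] using this
  have hzeq : ∀ x, z x = z 0 * Complex.exp (L0 x) := by
    intro x
    have h := hFconst x
    have : z x * Complex.exp (-L0 x) * Complex.exp (L0 x) = z 0 * Complex.exp (L0 x) := by
      rw [h]
    rwa [mul_assoc, ← Complex.exp_add, neg_add_cancel, Complex.exp_zero, mul_one] at this
  refine ⟨fun x => L0 x + Complex.log (z 0), ?_, ?_⟩
  · -- analyticity
    intro x0
    set L : ℝ → ℂ := fun x => L0 x + Complex.log (z 0) with hLdef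
    have hLc : Continuous L := hL0c.add continuous_const
    have hexpL : ∀ x, Complex.exp (L x) = z x := by
      intro x
      rw [hLdef]
      simp only []
      rw [Complex.exp_add, Complex.exp_log (hne 0), hzeq x]; ring
    set g : ℝ → ℂ := fun x => z x / z x0 with hgdef
    have hg1 : g x0 = 1 := div_self (hne x0)
    have hg_an : AnalyticAt ℝ g x0 := (hz x0).div analyticAt_const (hne x0)
    have hgne : ∀ x, g x ≠ 0 := fun x => div_ne_zero (hne x) (hne x0)
    have hlog : AnalyticAt ℝ (fun x => Complex.log (g x)) x0 := by
      have h1 : AnalyticAt ℂ Complex.log (g x0) := by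
        rw [hg1]; exact analyticAt_clog Complex.one_mem_slitPlane
      exact (h1.restrictScalars).comp hg_an
    set D : ℝ → ℂ := fun x => L x - L x0 - Complex.log (g x) with hDdef
    have hD0 : D x0 = 0 := by simp [hDdef, hg1]
    have hDc : ContinuousAt D x0 :=
      (hLc.continuousAt.sub continuousAt_const).sub hlog.continuousAt
    have hDint : ∀ x, ∃ n : ℤ, D x = n * (2 * π * Complex.I) := by
      intro x
      rw [← Complex.exp_eq_one_iff]
      rw [hDdef]
      simp only []
      rw [Complex.exp_sub, Complex.exp_sub, hexpL, hexpL, Complex.exp_log (hgne x)]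
      rw [hgdef]
      field_simp
      rw [mul_comm (z x) (z x0)]
      exact div_self (mul_ne_zero (hne x0) (hne x))
    have hev : ∀ᶠ x in nhds x0, D x = 0 := by
      have ht : Filter.Tendsto D (nhds x0) (nhds 0) := by
        rw [← hD0]; exact hDc
      have h1 : ∀ᶠ x in nhds x0, ‖D x‖ < 1 := by
        have := Metric.tendsto_nhds.mp ht 1 one_pos
        filter_upwards [this] with x hx
        simpa [dist_eq_norm] using hx
      filter_upwards [h1] with x hx
      obtain ⟨n, hn⟩ := hDint x
      rcases eq_or_ne n 0 with h | h
      · rw [hn, h]; simp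
      · exfalso
        rw [hn] at hx
        have h2 : (1:ℝ) ≤ |(n:ℝ)| := by
          have h4 : (1:ℤ) ≤ |n| := Int.one_le_abs h
          exact_mod_cast h4
        have h3 : ‖(n:ℂ) * (2 * π * Complex.I)‖ = |(n:ℝ)| * (2 * π) := by
          rw [norm_mul, norm_mul, norm_mul, Complex.norm_I, mul_one]
          norm_num [Complex.norm_real, Real.norm_eq_abs, _root_.abs_of_nonneg Real.pi_pos.le]
        rw [h3] at hx
        nlinarith [Real.pi_gt_three]
    have heq : (fun x => L x0 + Complex.log (g x)) =ᶠ[nhds x0] L := by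
      filter_upwards [hev] with x hx
      have : L x - L x0 - Complex.log (g x) = 0 := hx
      linear_combination -this
    exact (analyticAt_const.add hlog).congr heq
  · intro x
    rw [Complex.exp_add, Complex.exp_log (hne 0), hzeq x]; ring

noncomputable def Efun (i : ℤ) (x : ℝ) : ℂ :=
  Complex.exp (((2 * π * i * x : ℝ) : ℂ) * Complex.I)

lemma Efun_norm (i : ℤ) (x : ℝ) : ‖Efun i x‖ = 1 :=
  Complex.norm_exp_ofReal_mul_I _

lemma Efun_zero (x : ℝ) : Efun 0 x = 1 := by simp [Efun]

lemma Efun_cont (i : ℤ) : Continuous (Efun i) :=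
  Complex.continuous_exp.comp
    ((Complex.continuous_ofReal.comp (continuous_const.mul continuous_id')).mul continuous_const)

lemma Efun_mul (i : ℤ) (θ α : ℝ) (k : ℕ) : Efun i (θ + k * α) = Efun i θ * (Efun i α) ^ k := by
  rw [Efun, Efun, Efun, ← Complex.exp_nat_mul, ← Complex.exp_add]
  congr 1
  push_cast
  ring

lemma Efun_ne_one {α : ℝ} (hα : Irrational α) {i : ℤ} (hi : i ≠ 0) : Efun i α ≠ 1 := by
  intro h
  obtain ⟨n, hn⟩ := Complex.exp_eq_one_iff.mp h
  have h2 : ((2 * π * i * α : ℝ) : ℂ) * Complex.I = ((2 * π * n : ℝ) : ℂ) * Complex.I := by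
    rw [hn]; push_cast; ring
  have h3 : (2 * π * i * α : ℝ) = 2 * π * n :=
    Complex.ofReal_injective (mul_right_cancel₀ Complex.I_ne_zero h2)
  have h4 : (i : ℝ) * α = n := by
    have h2π : (2:ℝ) * π ≠ 0 := by positivity
    apply mul_left_cancel₀ h2π
    linarith [h3]
  apply hα
  refine ⟨(n : ℚ) / (i : ℚ), ?_⟩
  have hir : (i : ℝ) ≠ 0 := Int.cast_ne_zero.mpr hi
  push_cast
  field_simp
  linarith [h4]

lemma Efun_geom {α : ℝ} (hα : Irrational α) {i : ℤ} (hi : i ≠ 0) (n : ℕ) (θ : ℝ) :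
    ‖∑ k ∈ Finset.range n, Efun i (θ + k * α)‖ ≤ 2 / ‖Efun i α - 1‖ := by
  have hq := Efun_ne_one hα hi
  have hsum : ∑ k ∈ Finset.range n, Efun i (θ + k * α)
      = Efun i θ * ((Efun i α ^ n - 1) / (Efun i α - 1)) := by
    rw [← geom_sum_eq hq n, Finset.mul_sum]
    exact Finset.sum_congr rfl fun k _ => Efun_mul i θ α k
  rw [hsum, norm_mul, Efun_norm, one_mul, norm_div]
  have hpos : 0 < ‖Efun i α - 1‖ := norm_pos_iff.mpr (sub_ne_zero.mpr hq)
  have hnum : ‖Efun i α ^ n - 1‖ ≤ 2 := by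
    calc ‖Efun i α ^ n - 1‖ ≤ ‖Efun i α ^ n‖ + ‖(1:ℂ)‖ := norm_sub_le _ _
      _ = 2 := by rw [norm_pow, Efun_norm, one_pow, norm_one]; norm_num
  gcongr

lemma Efun_int {i : ℤ} (hi : i ≠ 0) : (∫ x in (0:ℝ)..1, Efun i x) = 0 := by
  have hc2 : ((i : ℂ) * (2 * ↑π * Complex.I)) ≠ 0 := by
    refine mul_ne_zero (Int.cast_ne_zero.mpr hi) ?_
    refine mul_ne_zero (mul_ne_zero two_ne_zero ?_) Complex.I_ne_zero
    exact_mod_cast Complex.ofReal_ne_zero.mpr Real.pi_ne_zero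
  have hEeq : ∀ x : ℝ, Efun i x = Complex.exp (((i : ℂ) * (2 * ↑π * Complex.I)) * x) := by
    intro x; rw [Efun]; congr 1; push_cast; ring
  rw [intervalIntegral.integral_congr (fun x _ => hEeq x)]
  rw [integral_exp_mul_complex hc2]
  rw [show ((i : ℂ) * (2 * ↑π * Complex.I)) * ((1:ℝ):ℂ) = (i : ℂ) * (2 * ↑π * Complex.I) by
    push_cast; ring]
  rw [show ((i : ℂ) * (2 * ↑π * Complex.I)) * ((0:ℝ):ℂ) = 0 by push_cast; ring]
  rw [Complex.exp_zero, Complex.exp_int_mul_two_pi_mul_I]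
  simp

lemma fourier_eq_Efun (i : ℤ) (x : ℝ) :
    (@fourier 1 i) (x : AddCircle (1:ℝ)) = Efun i x := by
  rw [fourier_coe_apply, Efun]
  congr 1
  push_cast
  field_simp

lemma part_one (α : ℝ) (hα : Irrational α) (φ : ℝ → ℝ)
    (hφa : ∀ x, AnalyticAt ℝ φ x) (hper : ∀ x, φ (x + 1) = φ x)
    (havg : (∫ x in (0:ℝ)..1, φ x) = 0) :
    TendstoUniformly
      (fun (n : ℕ) (θ : ℝ) => (1 / n : ℝ) * ∑ k ∈ Finset.range n, φ (θ + k * α))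
      (fun _ => 0) Filter.atTop := by
  classical
  have hφ_cont : Continuous φ := continuous_iff_continuousAt.2 fun x => (hφa x).continuousAt
  have hφℂ_cont : Continuous (fun x : ℝ => (φ x : ℂ)) :=
    Complex.continuous_ofReal.comp hφ_cont
  have hφℂ_per : Function.Periodic (fun x : ℝ => (φ x : ℂ)) 1 := fun x => by simp [hper x]
  haveI : Fact (0 < (1:ℝ)) := ⟨one_pos⟩
  set F : C(AddCircle (1:ℝ), ℂ) := ⟨hφℂ_per.lift, continuous_coinduced_dom.mpr hφℂ_cont⟩
    with hFdef
  have hFx : ∀ x : ℝ, F ↑x = (φ x : ℂ) := fun x => hφℂ_per.lift_coe x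
  rw [Metric.tendstoUniformly_iff]
  intro ε hε
  have hε3 : 0 < ε / 3 := by linarith
  -- approximate by a trigonometric polynomial
  have hFcl : F ∈ closure ((Submodule.span ℂ (Set.range (@fourier 1)) :
      Submodule ℂ C(AddCircle (1:ℝ), ℂ)) : Set C(AddCircle (1:ℝ), ℂ)) := by
    have h1 : F ∈ (Submodule.span ℂ (Set.range (@fourier 1))).topologicalClosure := by
      rw [span_fourier_closure_eq_top]; trivial
    have h2 : F ∈ ((Submodule.span ℂ (Set.range (@fourier 1))).topologicalClosure :
      Submodule ℂ C(AddCircle (1:ℝ), ℂ)) := h1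
    rwa [← Submodule.topologicalClosure_coe]
  obtain ⟨P, hPmem, hPF⟩ := Metric.mem_closure_iff.mp hFcl (ε/3) hε3
  obtain ⟨c, hc⟩ := Finsupp.mem_span_range_iff_exists_finsupp.mp hPmem
  set s : Finset ℤ := insert 0 c.support with hsdef
  have h0s : (0:ℤ) ∈ s := Finset.mem_insert_self 0 _
  -- pointwise formula for P
  have hPx : ∀ x : ℝ, P ↑x = ∑ i ∈ s, c i * Efun i x := by
    intro x
    rw [← hc, Finsupp.sum, ContinuousMap.sum_apply]
    rw [← Finset.sum_subset (Finset.subset_insert 0 c.support) (f := fun i => c i * Efun i x)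
      (fun i _ hi => by simp [Finsupp.notMem_support_iff.mp hi])]
    refine Finset.sum_congr rfl fun i _ => ?_
    rw [ContinuousMap.smul_apply, fourier_eq_Efun, smul_eq_mul]
  -- sup-norm bound
  have hbound : ∀ x : ℝ, ‖(φ x : ℂ) - P ↑x‖ ≤ ε / 3 := by
    intro x
    have h1 : dist (F ↑x) (P ↑x) ≤ dist F P := ContinuousMap.dist_apply_le_dist _
    rw [hFx x] at h1
    rw [← dist_eq_norm]
    linarith [hPF]
  -- c 0 is small
  have hPcont : Continuous (fun x : ℝ => P ↑x) :=
    P.continuous.comp continuous_quotient_mk'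
  have hc0_eq : (∫ x in (0:ℝ)..1, P ↑x) = c 0 := by
    rw [intervalIntegral.integral_congr (fun x _ => hPx x)]
    rw [intervalIntegral.integral_finset_sum (f := fun i x => c i * Efun i x)
      (fun i _ => ((continuous_const.mul (Efun_cont i)).intervalIntegrable 0 1))]
    have h1 : ∀ i ∈ s, (∫ x in (0:ℝ)..1, c i * Efun i x)
        = if i = 0 then c 0 else 0 := by
      intro i _
      rw [intervalIntegral.integral_const_mul]
      rcases eq_or_ne i 0 with rfl | hi
      · simp [Efun_zero]
      · rw [Efun_int hi, mul_zero, if_neg hi]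
    rw [Finset.sum_congr rfl h1, Finset.sum_ite_eq' s 0 (fun _ => c 0), if_pos h0s]
  have hc0 : ‖(c 0 : ℂ)‖ ≤ ε / 3 := by
    have h1 : (∫ x in (0:ℝ)..1, (P ↑x - (φ x : ℂ))) = c 0 := by
      rw [intervalIntegral.integral_sub (hPcont.intervalIntegrable 0 1)
        (hφℂ_cont.intervalIntegrable 0 1), hc0_eq]
      have h2 : (∫ x in (0:ℝ)..1, (φ x : ℂ)) = ((∫ x in (0:ℝ)..1, φ x : ℝ) : ℂ) :=
        intervalIntegral.integral_ofReal
      rw [h2, havg]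
      simp
    rw [← h1]
    have h3 := intervalIntegral.norm_integral_le_of_norm_le_const
      (C := ε/3) (f := fun x => P ↑x - (φ x : ℂ)) (a := 0) (b := 1) ?_
    · simpa using h3
    · intro x _
      rw [← norm_neg]
      simpa using hbound x
  -- the tail constant
  set C : ℝ := ∑ i ∈ s.erase 0, ‖c i‖ * (2 / ‖Efun i α - 1‖) with hCdef
  have hCn : Tendsto (fun n : ℕ => C / n) atTop (nhds 0) :=
    tendsto_const_div_atTop_nhds_zero_nat C
  have hev : ∀ᶠ n : ℕ in atTop, C / n < ε / 3 :=
    hCn.eventually_lt_const hε3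
  filter_upwards [hev, Filter.eventually_ge_atTop 1] with n hn hn1
  intro θ
  have hn0 : (n:ℝ) ≠ 0 := Nat.cast_ne_zero.mpr (by omega)
  have hn0' : (n:ℂ) ≠ 0 := Nat.cast_ne_zero.mpr (by omega)
  -- complex Birkhoff average
  set A : ℂ := (1 / n : ℂ) * ∑ k ∈ Finset.range n, (φ (θ + k * α) : ℂ) with hAdef
  have hAre : ((1 / n : ℝ) * ∑ k ∈ Finset.range n, φ (θ + k * α) : ℂ) = A := by
    rw [hAdef]
    push_cast
    ring
  -- decompose A
  have h2 : ∑ k ∈ Finset.range n, (P ↑(θ + k * α) : ℂ)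
      = ∑ i ∈ s, c i * ∑ k ∈ Finset.range n, Efun i (θ + k * α) := by
    calc ∑ k ∈ Finset.range n, (P ↑(θ + k * α) : ℂ)
        = ∑ k ∈ Finset.range n, ∑ i ∈ s, c i * Efun i (θ + k * α) :=
          Finset.sum_congr rfl fun k _ => hPx (θ + k * α)
      _ = ∑ i ∈ s, ∑ k ∈ Finset.range n, c i * Efun i (θ + k * α) := Finset.sum_comm
      _ = ∑ i ∈ s, c i * ∑ k ∈ Finset.range n, Efun i (θ + k * α) :=
          Finset.sum_congr rfl fun i _ => (Finset.mul_sum _ _ _).symm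
  have h3 : ∑ i ∈ s, c i * ∑ k ∈ Finset.range n, Efun i (θ + k * α)
      = c 0 * n + ∑ i ∈ s.erase 0, c i * ∑ k ∈ Finset.range n, Efun i (θ + k * α) := by
    rw [← Finset.add_sum_erase s _ h0s]
    congr 2
    calc ∑ k ∈ Finset.range n, Efun 0 (θ + k * α)
        = ∑ _k ∈ Finset.range n, (1:ℂ) :=
          Finset.sum_congr rfl fun k _ => Efun_zero (θ + k * α)
      _ = n := by rw [Finset.sum_const, Finset.card_range]; simp
  have hsplit : A = (1 / n : ℂ) * ∑ k ∈ Finset.range n, ((φ (θ + k * α) : ℂ) - P ↑(θ + k * α))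
      + c 0
      + (1 / n : ℂ) * ∑ i ∈ s.erase 0, c i * ∑ k ∈ Finset.range n, Efun i (θ + k * α) := by
    rw [hAdef]
    have h4 : ∑ k ∈ Finset.range n, (φ (θ + k * α) : ℂ)
        = ∑ k ∈ Finset.range n, ((φ (θ + k * α) : ℂ) - P ↑(θ + k * α))
          + ∑ k ∈ Finset.range n, (P ↑(θ + k * α) : ℂ) := by
      rw [← Finset.sum_add_distrib]
      exact Finset.sum_congr rfl fun k _ => by ring
    rw [h4, h2, h3]
    rw [mul_add, mul_add, show (1 / n : ℂ) * (c 0 * n) = c 0 by field_simp]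
    ring
  -- bound the three pieces
  have hT1 : ‖(1 / n : ℂ) * ∑ k ∈ Finset.range n, ((φ (θ + k * α) : ℂ) - P ↑(θ + k * α))‖
      ≤ ε / 3 := by
    rw [norm_mul]
    have hn1 : ‖(1 / n : ℂ)‖ = 1 / n := by
      rw [norm_div, norm_one]
      congr 1
      exact_mod_cast Complex.norm_natCast n
    rw [hn1]
    have h5 : ‖∑ k ∈ Finset.range n, ((φ (θ + k * α) : ℂ) - P ↑(θ + k * α))‖
        ≤ n * (ε / 3) := by
      refine (norm_sum_le _ _).trans ?_
      calc ∑ k ∈ Finset.range n, ‖(φ (θ + k * α) : ℂ) - P ↑(θ + k * α)‖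
          ≤ ∑ _k ∈ Finset.range n, (ε / 3) :=
            Finset.sum_le_sum fun k _ => hbound (θ + k * α)
        _ = n * (ε / 3) := by rw [Finset.sum_const, Finset.card_range, nsmul_eq_mul]
    calc (1 / (n:ℝ)) * ‖∑ k ∈ Finset.range n, ((φ (θ + k * α) : ℂ) - P ↑(θ + k * α))‖
        ≤ (1 / (n:ℝ)) * (n * (ε / 3)) := by
          apply mul_le_mul_of_nonneg_left h5
          positivity
      _ = ε / 3 := by field_simp
  have hT3 : ‖(1 / n : ℂ) * ∑ i ∈ s.erase 0, c i * ∑ k ∈ Finset.range n, Efun i (θ + k * α)‖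
      ≤ C / n := by
    rw [norm_mul]
    have hn1 : ‖(1 / n : ℂ)‖ = 1 / n := by
      rw [norm_div, norm_one]
      congr 1
      exact_mod_cast Complex.norm_natCast n
    rw [hn1]
    have h5 : ‖∑ i ∈ s.erase 0, c i * ∑ k ∈ Finset.range n, Efun i (θ + k * α)‖ ≤ C := by
      refine (norm_sum_le _ _).trans ?_
      rw [hCdef]
      refine Finset.sum_le_sum fun i hi => ?_
      rw [norm_mul]
      exact mul_le_mul_of_nonneg_left
        (Efun_geom hα (Finset.ne_of_mem_erase hi) n θ) (norm_nonneg _)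
    calc (1 / (n:ℝ)) * ‖∑ i ∈ s.erase 0, c i * ∑ k ∈ Finset.range n, Efun i (θ + k * α)‖
        ≤ (1 / (n:ℝ)) * C := by
          apply mul_le_mul_of_nonneg_left h5
          positivity
      _ = C / n := by field_simp
  have hAbound : ‖A‖ < ε := by
    rw [hsplit]
    calc ‖_ + c 0 + _‖ ≤ ‖_ + (c 0 : ℂ)‖ + _ := norm_add_le _ _
      _ ≤ ‖(1 / n : ℂ) * ∑ k ∈ Finset.range n, ((φ (θ + k * α) : ℂ) - P ↑(θ + k * α))‖
          + ‖(c 0 : ℂ)‖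
          + ‖(1 / n : ℂ) * ∑ i ∈ s.erase 0,
              c i * ∑ k ∈ Finset.range n, Efun i (θ + k * α)‖ := by
            exact add_le_add_left (norm_add_le _ _) _
      _ < ε := by
        have := hT1
        have := hc0
        have := hT3
        linarith [hn]
  rw [dist_comm, Real.dist_0_eq_abs]
  have h9 : ‖A‖ = |(1 / (n:ℝ)) * ∑ k ∈ Finset.range n, φ (θ + k * α)| := by
    rw [← hAre, ← Complex.ofReal_mul, Complex.norm_real, Real.norm_eq_abs]
  rw [← h9]
  exact hAbound

lemma rot_rel (θ : ℝ) (B Bp : Matrix (Fin 2) (Fin 2) ℝ) (hdet : B.det = 1) (hdetp : Bp.det = 1)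
    (htri : (Bp * RotR θ * B⁻¹) 1 0 = 0) :
    Complex.exp (θ * Complex.I) * ((B 1 1 : ℂ) - Complex.I * B 1 0)
      = (((Bp * RotR θ * B⁻¹) 0 0 : ℝ) : ℂ) * ((Bp 1 1 : ℂ) - Complex.I * Bp 1 0) := by
  have hinv : B⁻¹ = !![B 1 1, -(B 0 1); -(B 1 0), B 0 0] := by
    rw [Matrix.inv_def, hdet, Matrix.adjugate_fin_two]
    simp
  rw [hinv] at htri ⊢
  rw [Matrix.det_fin_two] at hdet hdetp
  simp only [RotR, Matrix.mul_apply, Fin.sum_univ_two, Matrix.cons_val_zero,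
    Matrix.cons_val_one, Matrix.head_cons, Matrix.head_fin_const, Matrix.of_apply,
    Matrix.cons_val', Matrix.empty_val', Matrix.cons_val_fin_one] at htri ⊢
  rw [Complex.ext_iff]
  constructor
  · simp [Complex.exp_ofReal_mul_I_re, Complex.exp_ofReal_mul_I_im]
    push_cast
    simp only [Complex.cos_ofReal_re, Complex.sin_ofReal_re]
    linear_combination (-(Bp 0 1)) * htri +
      (-(Real.cos θ * B 1 1 + Real.sin θ * B 1 0)) * hdetp
  · simp [Complex.exp_ofReal_mul_I_re, Complex.exp_ofReal_mul_I_im]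
    push_cast
    simp only [Complex.cos_ofReal_re, Complex.sin_ofReal_re]
    linear_combination (Bp 0 0) * htri +
      (Real.cos θ * B 1 0 - Real.sin θ * B 1 1) * hdetp

lemma part_two (α : ℝ) (hα : Irrational α) (φ : ℝ → ℝ)
    (hφa : ∀ x, AnalyticAt ℝ φ x) (hper : ∀ x, φ (x + 1) = φ x)
    (havg : (∫ x in (0:ℝ)..1, φ x) = 0)
    (hcob : ¬ ∃ ψ : ℝ → ℝ, (∀ x, AnalyticAt ℝ ψ x) ∧ (∀ x, ψ (x + 1) = ψ x) ∧
      ∀ x, φ x = ψ (x + α) - ψ x) :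
    ¬ ∃ B : ℝ → Matrix (Fin 2) (Fin 2) ℝ,
      (∀ (x : ℝ) (i j : Fin 2), AnalyticAt ℝ (fun y => B y i j) x) ∧
      (∀ x, B (x + 1) = B x) ∧ (∀ x, (B x).det = 1) ∧
      ∀ x, (B (x + α) * RotR (2 * Real.pi * φ x) * (B x)⁻¹) 1 0 = 0 := by
  rintro ⟨B, hBa, hBper, hBdet, htri⟩
  set z : ℝ → ℂ := fun x => ((B x 1 1 : ℝ) : ℂ) - Complex.I * ((B x 1 0 : ℝ) : ℂ) with hzdef
  have hz_an : ∀ x, AnalyticAt ℝ z x := by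
    intro x
    have h1 : AnalyticAt ℝ (fun y => ((B y 1 1 : ℝ) : ℂ)) x :=
      (Complex.ofRealCLM.analyticAt _).comp (hBa x 1 1)
    have h2 : AnalyticAt ℝ (fun y => ((B y 1 0 : ℝ) : ℂ)) x :=
      (Complex.ofRealCLM.analyticAt _).comp (hBa x 1 0)
    exact h1.sub (analyticAt_const.mul h2)
  have hz_ne : ∀ x, z x ≠ 0 := by
    intro x h
    have hre : B x 1 1 = 0 := by
      have := congrArg Complex.re h
      simpa [hzdef] using this
    have him : B x 1 0 = 0 := by
      have := congrArg Complex.im h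
      simpa [hzdef] using this
    have hd := hBdet x
    rw [Matrix.det_fin_two] at hd
    rw [hre, him] at hd
    simp at hd
  obtain ⟨L, hLa, hLexp⟩ := exists_global_log hz_an hz_ne
  set u : ℝ → ℝ := fun x => (L x).im with hudef
  have hL_cont : Continuous L := continuous_iff_continuousAt.2 fun x => (hLa x).continuousAt
  have hu_cont : Continuous u := Complex.continuous_im.comp hL_cont
  have hu_an : ∀ x, AnalyticAt ℝ u x := fun x => (Complex.imCLM.analyticAt _).comp (hLa x)
  have hφ_cont : Continuous φ := continuous_iff_continuousAt.2 fun x => (hφa x).continuousAt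
  -- the key relation
  have hrel : ∀ x, Complex.exp (((2 * π * φ x : ℝ) : ℂ) * Complex.I) * z x
      = (((B (x + α) * RotR (2 * π * φ x) * (B x)⁻¹) 0 0 : ℝ) : ℂ) * z (x + α) := by
    intro x
    exact rot_rel (2 * π * φ x) (B x) (B (x + α)) (hBdet x) (hBdet (x + α)) (htri x)
  have hW : ∀ x, Complex.exp (((2 * π * φ x : ℝ) : ℂ) * Complex.I + L x - L (x + α))
      = (((B (x + α) * RotR (2 * π * φ x) * (B x)⁻¹) 0 0 : ℝ) : ℂ) := by
    intro x
    rw [Complex.exp_sub, Complex.exp_add, hLexp, hLexp, hrel x]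
    rw [mul_div_assoc, div_self (hz_ne (x + α)), mul_one]
  -- imaginary part: quantization
  have him : ∀ x, ∃ m : ℤ, 2 * π * φ x + (u x - u (x + α)) = m * π := by
    intro x
    have h1 := congrArg Complex.im (hW x)
    rw [Complex.exp_im] at h1
    have h2 : Real.sin ((((2 * π * φ x : ℝ) : ℂ) * Complex.I + L x - L (x + α)).im) = 0 := by
      have h3 : (((((B (x + α) * RotR (2 * π * φ x) * (B x)⁻¹) 0 0 : ℝ)) : ℂ)).im = 0 :=
        Complex.ofReal_im _
      rw [h3] at h1
      have h4 := Real.exp_pos ((((2 * π * φ x : ℝ) : ℂ) * Complex.I + L x - L (x + α)).re)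
      rcases mul_eq_zero.mp h1 with h | h
      · exact absurd h h4.ne'
      · exact h
    obtain ⟨m, hm⟩ := Real.sin_eq_zero_iff.mp h2
    refine ⟨m, ?_⟩
    have h5 : ((((2 * π * φ x : ℝ) : ℂ)) * Complex.I + L x - L (x + α)).im
        = 2 * π * φ x + (u x - u (x + α)) := by
      simp [hudef]
      ring
    rw [h5] at hm
    exact hm.symm
  -- constancy of m
  set k : ℝ → ℝ := fun x => (2 * π * φ x + (u x - u (x + α))) / π with hkdef
  have hk_cont : Continuous k :=
    ((continuous_const.mul hφ_cont).add
      (hu_cont.sub (hu_cont.comp (continuous_id.add continuous_const)))).div_const π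
  have hk_int : ∀ x, ∃ m : ℤ, k x = m := by
    intro x
    obtain ⟨m, hm⟩ := him x
    exact ⟨m, by rw [hkdef]; simp only []; rw [hm, mul_div_assoc, div_self Real.pi_ne_zero, mul_one]⟩
  obtain ⟨m₀, hm₀⟩ := hk_int 0
  have hm : ∀ x, 2 * π * φ x + (u x - u (x + α)) = m₀ * π := by
    intro x
    have h1 : k x = m₀ := (intval_const hk_cont hk_int x 0).trans hm₀
    have h2 : k x * π = m₀ * π := by rw [h1]
    rwa [hkdef, div_mul_cancel₀ _ Real.pi_ne_zero] at h2
  -- periodicity degree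
  have hzper : ∀ x, z (x + 1) = z x := by
    intro x; simp only [hzdef, hBper x]
  set j : ℝ → ℝ := fun x => (u (x + 1) - u x) / (2 * π) with hjdef
  have hj_quant : ∀ x, ∃ n : ℤ, L (x + 1) - L x = n * (2 * π * Complex.I) := by
    intro x
    rw [← Complex.exp_eq_one_iff, Complex.exp_sub, hLexp, hLexp, hzper x,
      div_self (hz_ne x)]
  have hj_int : ∀ x, ∃ n : ℤ, j x = n := by
    intro x
    obtain ⟨n, hn⟩ := hj_quant x
    refine ⟨n, ?_⟩
    have h1 : u (x + 1) - u x = n * (2 * π) := by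
      have := congrArg Complex.im hn
      simpa [hudef] using this
    rw [hjdef]; simp only []
    rw [h1, mul_div_assoc, div_self (by positivity : (2:ℝ) * π ≠ 0), mul_one]
  have hj_cont : Continuous j :=
    ((hu_cont.comp (continuous_id.add continuous_const)).sub hu_cont).div_const _
  obtain ⟨d, hd₀⟩ := hj_int 0
  have hd : ∀ x, u (x + 1) - u x = d * (2 * π) := by
    intro x
    have h1 : j x = d := (intval_const hj_cont hj_int x 0).trans hd₀
    have h2 : j x * (2 * π) = d * (2 * π) := by rw [h1]
    rwa [hjdef, div_mul_cancel₀ _ (by positivity : (2:ℝ) * π ≠ 0)] at h2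
  -- integrate
  have hint_u : ∀ a b : ℝ, IntervalIntegrable u MeasureTheory.volume a b :=
    fun a b => hu_cont.intervalIntegrable a b
  have hint_uα : IntervalIntegrable (fun x => u (x + α)) MeasureTheory.volume 0 1 :=
    (hu_cont.comp (continuous_id.add continuous_const)).intervalIntegrable 0 1
  have hint_φ : IntervalIntegrable (fun x => 2 * π * φ x) MeasureTheory.volume 0 1 :=
    (continuous_const.mul hφ_cont).intervalIntegrable 0 1
  have hI1 : (∫ x in (0:ℝ)..1, (2 * π * φ x + (u x - u (x + α)))) = m₀ * π := by
    rw [show (fun x => 2 * π * φ x + (u x - u (x + α))) = fun _ => (m₀ : ℝ) * π from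
      funext hm]
    simp
  have hI2 : (∫ x in (0:ℝ)..1, (2 * π * φ x + (u x - u (x + α))))
      = (∫ x in (0:ℝ)..1, u x) - ∫ x in (0:ℝ)..1, u (x + α) := by
    rw [intervalIntegral.integral_add hint_φ ((hint_u 0 1).sub hint_uα),
      intervalIntegral.integral_sub (hint_u 0 1) hint_uα]
    have : (∫ x in (0:ℝ)..1, 2 * π * φ x) = 0 := by
      rw [intervalIntegral.integral_const_mul, havg, mul_zero]
    rw [this, zero_add]
  have hI3 : (∫ x in (0:ℝ)..1, u (x + α)) = ∫ x in α..(1 + α), u x := by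
    have := intervalIntegral.integral_comp_add_right (a := (0:ℝ)) (b := 1) (f := u) α
    rw [this, zero_add, add_comm]
  have hI4 : (∫ x in (0:ℝ)..α, u x) + (∫ x in α..(1 + α), u x) = ∫ x in (0:ℝ)..(1 + α), u x :=
    intervalIntegral.integral_add_adjacent_intervals (hint_u 0 α) (hint_u α (1 + α))
  have hI5 : (∫ x in (0:ℝ)..1, u x) + (∫ x in (1:ℝ)..(1 + α), u x)
      = ∫ x in (0:ℝ)..(1 + α), u x :=
    intervalIntegral.integral_add_adjacent_intervals (hint_u 0 1) (hint_u 1 (1 + α))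
  have hI6 : (∫ x in (1:ℝ)..(1 + α), u x) = ∫ x in (0:ℝ)..α, u (x + 1) := by
    have := intervalIntegral.integral_comp_add_right (a := (0:ℝ)) (b := α) (f := u) 1
    rw [this, zero_add, add_comm]
  have hI7 : (∫ x in (0:ℝ)..α, u (x + 1)) = (∫ x in (0:ℝ)..α, u x) + α * (d * (2 * π)) := by
    have heq : (fun x => u (x + 1)) = fun x => u x + d * (2 * π) := by
      funext x
      have := hd x
      linarith
    rw [heq, intervalIntegral.integral_add (hint_u 0 α)
      (intervalIntegrable_const)]
    simp
    ring
  -- combine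
  have hkey : (m₀ : ℝ) * π + 2 * π * d * α = 0 := by
    have e1 : (∫ x in (0:ℝ)..1, u (x + α)) - (∫ x in (0:ℝ)..1, u x) = α * (d * (2 * π)) := by
      rw [hI3]
      have : (∫ x in α..(1 + α), u x) = (∫ x in (0:ℝ)..(1 + α), u x) - ∫ x in (0:ℝ)..α, u x := by
        linarith [hI4]
      rw [this]
      have : (∫ x in (0:ℝ)..(1 + α), u x)
          = (∫ x in (0:ℝ)..1, u x) + (∫ x in (0:ℝ)..α, u x) + α * (d * (2 * π)) := by
        rw [← hI5, hI6, hI7]; ring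
      rw [this]; ring
    have e2 := hI1
    rw [hI2] at e2
    nlinarith [e1, e2]
  -- irrationality forces d = 0 and m₀ = 0
  have hd0 : d = 0 := by
    by_contra hdne
    apply hα
    refine ⟨-(m₀ : ℚ) / (2 * d), ?_⟩
    have hdr : (d : ℝ) ≠ 0 := Int.cast_ne_zero.mpr hdne
    have : α = -(m₀ : ℝ) / (2 * d) := by
      field_simp
      nlinarith [hkey, Real.pi_ne_zero, Real.pi_pos]
    rw [this]
    push_cast
    ring
  have hm0 : (m₀ : ℝ) = 0 := by
    rw [hd0] at hkey
    push_cast at hkey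
    have h6 : (m₀ : ℝ) * π = 0 := by linarith
    rcases mul_eq_zero.mp h6 with h | h
    · exact h
    · exact absurd h Real.pi_ne_zero
  -- build the coboundary
  apply hcob
  refine ⟨fun x => u x / (2 * π), ?_, ?_, ?_⟩
  · intro x
    exact (hu_an x).div analyticAt_const (by positivity)
  · intro x
    have := hd x
    rw [hd0] at this
    push_cast at this
    have h2 : u (x + 1) = u x := by linarith
    show u (x + 1) / (2 * π) = u x / (2 * π)
    rw [h2]
  · intro x
    have h1 := hm x
    rw [hm0, zero_mul] at h1
    have h2 : 2 * π * φ x = u (x + α) - u x := by linarith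
    field_simp
    linarith [h2]


/-- If `φ` is real-analytic on `𝕋`, has average `0` and is not an analytic
coboundary over the rotation by irrational `α`, then the cocycle
`(α, R_φ)` (rotation by angle `2πφ`) has fibered rotation number `0`
(its Birkhoff averages converge uniformly to `0`) but cannot be analytically
conjugated to upper triangular form. -/
theorem stmt17 (α : ℝ) (hα : Irrational α) (φ : ℝ → ℝ)
    (hφa : ∀ x, AnalyticAt ℝ φ x) (hper : ∀ x, φ (x + 1) = φ x)
    (havg : (∫ x in (0:ℝ)..1, φ x) = 0)
    (hcob : ¬ ∃ ψ : ℝ → ℝ, (∀ x, AnalyticAt ℝ ψ x) ∧ (∀ x, ψ (x + 1) = ψ x) ∧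
      ∀ x, φ x = ψ (x + α) - ψ x) :
    TendstoUniformly
      (fun (n : ℕ) (θ : ℝ) => (1 / n : ℝ) * ∑ k ∈ Finset.range n, φ (θ + k * α))
      (fun _ => 0) Filter.atTop ∧
    ¬ ∃ B : ℝ → Matrix (Fin 2) (Fin 2) ℝ,
      (∀ (x : ℝ) (i j : Fin 2), AnalyticAt ℝ (fun y => B y i j) x) ∧
      (∀ x, B (x + 1) = B x) ∧ (∀ x, (B x).det = 1) ∧
      ∀ x, (B (x + α) * RotR (2 * Real.pi * φ x) * (B x)⁻¹) 1 0 = 0 :=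
  ⟨part_one α hα φ hφa hper havg, part_two α hα φ hφa hper havg hcob⟩
end

section
/- Let ρ > 0, and suppose φ : T → R is continuous with inf_{x∈T} ‖R_{2φ(x)} − Id‖ ≥ ρ (operator norm). Then for any α ∈ R, inf_{x∈T} ‖R_{φ(x+α)+φ(x)} − Id‖ ≥ ρ; i.e., the lower bound on the distance of the doubled rotation angle from the identity persists for the symmetrized sum, because inf_x ‖R_{φ(x+α)+φ(x)} − Id‖ ≥ inf_x ‖R_{2φ(x)} − Id‖ by the intermediate value theorem applied to the continuous function x ↦ φ(x+α)+φ(x) on the compact connected space T. -/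
open scoped Matrix.Norms.L2Operator

/-- If `‖R_{2φ(x)} − Id‖ ≥ ρ` for all `x` and `φ` is continuous and
`1`-periodic, then `‖R_{φ(x+α)+φ(x)} − Id‖ ≥ ρ` for all `α` and `x`. -/
theorem stmt19 (ρ : ℝ) (hρ : 0 < ρ) (φ : ℝ → ℝ)
    (hcont : Continuous φ) (hper : ∀ x, φ (x + 1) = φ x)
    (hlow : ∀ x, ρ ≤ ‖RotR (2 * φ x) - 1‖) :
    ∀ α x : ℝ, ρ ≤ ‖RotR (φ (x + α) + φ x) - 1‖ := by
  intro α x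
  have hper' : Function.Periodic φ 1 := hper
  -- min and max on [0,1]
  obtain ⟨a, ha, hmin⟩ := (isCompact_Icc (a := (0:ℝ)) (b := 1)).exists_isMinOn
    (Set.nonempty_Icc.mpr zero_le_one) hcont.continuousOn
  obtain ⟨b, hb, hmax⟩ := (isCompact_Icc (a := (0:ℝ)) (b := 1)).exists_isMaxOn
    (Set.nonempty_Icc.mpr zero_le_one) hcont.continuousOn
  -- every value of φ is between φ a and φ b
  have hbound : ∀ t : ℝ, φ a ≤ φ t ∧ φ t ≤ φ b := by
    intro t
    have hfr : φ (Int.fract t) = φ t := by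
      have h := hper'.sub_int_mul_eq (x := t) (n := ⌊t⌋)
      rw [mul_one] at h
      rw [Int.fract]
      exact h
    have hmem : Int.fract t ∈ Set.Icc (0:ℝ) 1 :=
      ⟨Int.fract_nonneg t, (Int.fract_lt_one t).le⟩
    exact ⟨hfr ▸ hmin hmem, hfr ▸ hmax hmem⟩
  set c := φ (x + α) + φ x with hc
  have hcmem : c ∈ Set.uIcc (2 * φ a) (2 * φ b) := by
    have h1 := hbound (x + α)
    have h2 := hbound x
    rw [Set.uIcc_of_le (by linarith [hmin hb])]
    constructor <;> simp only [hc] <;> linarith [h1.1, h1.2, h2.1, h2.2]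
  have := intermediate_value_uIcc (a := a) (b := b)
    (f := fun t => 2 * φ t) (by fun_prop) hcmem
  obtain ⟨y, _, hy⟩ := this
  calc ρ ≤ ‖RotR (2 * φ y) - 1‖ := hlow y
    _ = ‖RotR c - 1‖ := by simp only at hy; rw [hy]
end
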